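/- Let V ⊆ ℝ^{2N} be a co-isotropic subspace (V° ⊆ V) and let K = Π_V ∘ J : V → V where Π_V is orthogonal projection onto V and J the standard complex structure. Then the image of K equals J(V) ∩ V, the maximal complex subspace of V. -/

import Mathlib

/-- If `V ⊆ ℝ^{2N} ≅ ℂ^N` is co-isotropic (`V° ⊆ V`) and `K = Π_V ∘ J : V → V`,
then the image of `K` equals `J(V) ∩ V`, the maximal complex subspace of `V`. -/
theorem image_K_eq_maximal_complex_subspace (N : ℕ)
    (V : Submodule ℝ (EuclideanSpace ℂ (Fin N)))
    (K : EuclideanSpace ℂ (Fin N) → EuclideanSpace ℂ (Fin N))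
    (hK : ∀ v ∈ V, K v ∈ V ∧ ∀ u ∈ V, (inner ℂ (Complex.I • v - K v) u : ℂ).re = 0)
    (hco : {x : EuclideanSpace ℂ (Fin N) | ∀ v ∈ V, (inner ℂ x (Complex.I • v) : ℂ).re = 0}
      ⊆ (V : Set (EuclideanSpace ℂ (Fin N)))) :
    K '' (V : Set (EuclideanSpace ℂ (Fin N)))
      = ((fun v => Complex.I • v) '' (V : Set (EuclideanSpace ℂ (Fin N))))
        ∩ (V : Set (EuclideanSpace ℂ (Fin N))) := by
  ext z
  constructor
  · rintro ⟨v, hv, rfl⟩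
    obtain ⟨hKv, hperp⟩ := hK v hv
    -- y := I • (I • v - K v) satisfies the co-isotropy condition
    have hy : Complex.I • (Complex.I • v - K v) ∈
        {x : EuclideanSpace ℂ (Fin N) | ∀ u ∈ V, (inner ℂ x (Complex.I • u) : ℂ).re = 0} := by
      intro u hu
      have : (inner ℂ (Complex.I • (Complex.I • v - K v)) (Complex.I • u) : ℂ)
          = inner ℂ (Complex.I • v - K v) u := by
        rw [inner_smul_left, inner_smul_right, Complex.conj_I]
        ring_nf
        rw [Complex.I_sq]
        ring
      rw [this]
      exact hperp u hu
    have hyV : Complex.I • (Complex.I • v - K v) ∈ V := hco hy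
    have hyeq : Complex.I • (Complex.I • v - K v) = -v - Complex.I • K v := by
      rw [smul_sub, smul_smul, Complex.I_mul_I]
      simp
    rw [hyeq] at hyV
    have hmIK : -(Complex.I • K v) ∈ V := by
      have := V.add_mem hyV hv
      have h2 : -v - Complex.I • K v + v = -(Complex.I • K v) := by abel
      rwa [h2] at this
    refine ⟨⟨-(Complex.I • K v), hmIK, ?_⟩, hKv⟩
    show Complex.I • -(Complex.I • K v) = K v
    rw [smul_neg, smul_smul, Complex.I_mul_I]
    simp
  · rintro ⟨⟨w, hw, rfl⟩, hIwV⟩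
    obtain ⟨hKw, hperp⟩ := hK w hw
    refine ⟨w, hw, ?_⟩
    have hd : Complex.I • w - K w ∈ V := V.sub_mem hIwV hKw
    have h0 : (inner ℂ (Complex.I • w - K w) (Complex.I • w - K w) : ℂ).re = 0 :=
      hperp _ hd
    have hnorm : ‖Complex.I • w - K w‖ = 0 := by
      have h1 := @inner_self_eq_norm_sq ℂ _ _ _ _ (Complex.I • w - K w)
      have h0' : RCLike.re (inner ℂ (Complex.I • w - K w) (Complex.I • w - K w) : ℂ) = 0 := h0
      nlinarith [norm_nonneg (Complex.I • w - K w)]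
    have : Complex.I • w - K w = 0 := norm_eq_zero.mp hnorm
    have := sub_eq_zero.mp this
    exact this.symm
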